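/- Pooled allocation preservation: if (Γ, X, Φ) is well-formed, Φ(ys) = π·πs with π ≠ none, X(π) = (L, πs', κ₀..κₙ) strongly agrees with its layout type, and layout L for class C has clusters fs₀..fsₙ, then the heap obtained by appending null^|fsᵢ| to each κᵢ is well-formed, and the new location (π, |κ₀|) weakly agrees with C<Φ(ys)>. -/

import Mathlib

namespace Shapes

abbrev FieldId := ℕ
abbrev VarId := ℕ
abbrev ClassId := ℕ
abbrev LayoutId := ℕ
abbrev MethodId := ℕ

/-- A pool address: `none` is the global none-pool, `some n` a heap pool address. -/
abbrev PoolAddr := Option ℕ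

inductive Value where
  | null
  | obj (ω : ℕ)
  | loc (π : ℕ) (n : ℕ)
deriving DecidableEq

/-- A pool variable: `none` is the `none` keyword. -/
abbrev PoolVar := Option VarId

inductive RVal where
  | val (v : Value)
  | pool (π : PoolAddr)
deriving DecidableEq

abbrev Frame := VarId → Option RVal

/-- The value of a pool variable in a frame. -/
def poolOf (Φ : Frame) : PoolVar → Option PoolAddr
  | none => some none
  | some y => match Φ y with
    | some (RVal.pool π) => some π
    | _ => none

structure Obj where
  cls : ClassId
  params : List PoolAddr
  record : List Value

structure Pool where
  layout : LayoutId
  params : List PoolAddr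
  clusters : List (List (List Value))

abbrev Heap := ℕ → Option (Obj ⊕ Pool)

inductive Expr where
  | null
  | var (x : VarId)
  | newE (C : ClassId) (ys : List PoolVar)
  | call (x : VarId) (m : MethodId) (x' : VarId)
  | read (x : VarId) (f : FieldId)
  | write (x : VarId) (f : FieldId) (x' : VarId)
  | assign (x : VarId) (e : Expr)

structure MethodDecl where
  param : VarId
  paramTy : ClassId × List PoolVar
  retTy : ClassId × List PoolVar
  pools : List (VarId × LayoutId × List PoolVar)
  locals : List (VarId × ClassId × List PoolVar)
  body : Expr

structure ClassDecl where
  params : List (VarId × ClassId × List PoolVar)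
  fields : List (FieldId × ClassId × List PoolVar)
  methods : List MethodDecl

structure LayoutDecl where
  cls : ClassId
  clusters : List (List FieldId)

structure Program where
  classes : ClassId → Option ClassDecl
  layouts : LayoutId → Option LayoutDecl

def owners (cd : ClassDecl) : List VarId := cd.params.map (·.1)

def layoutClass (P : Program) (L : LayoutId) : Option ClassId :=
  (P.layouts L).map (·.cls)

def flookup (cd : ClassDecl) (f : FieldId) : Option (ClassId × List PoolVar) :=
  (cd.fields.find? (fun p => p.1 == f)).map (·.2)

def fieldsOf (cd : ClassDecl) : List FieldId := cd.fields.map (·.1)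

def mlookup (cd : ClassDecl) (m : MethodId) : Option MethodDecl := cd.methods[m]?

/-- Offset of a field in an unpooled object. -/
def offsetC (cd : ClassDecl) (f : FieldId) : Option ℕ :=
  (fieldsOf cd).idxOf? f

/-- Offset `(i, j)` of a field in a layout: cluster index `i`, position `j`. -/
def offsetL (ld : LayoutDecl) (f : FieldId) : Option (ℕ × ℕ) :=
  (ld.clusters.findIdx? (fun κ => κ.contains f)).bind fun i =>
    ((ld.clusters.getD i []).idxOf? f).map fun j => (i, j)

/-- Substitution of formal pool parameters by pool addresses. -/
def substPA (formals : List VarId) (πs : List PoolAddr) : PoolVar → PoolAddr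
  | none => none
  | some y => match formals.idxOf? y with
    | some i => πs.getD i none
    | none => none

/-- Substitution of formal pool parameters by pool variables (actuals). -/
def substPV (formals : List VarId) (actuals : List PoolVar) : PoolVar → PoolVar
  | none => none
  | some y => match formals.idxOf? y with
    | some i => actuals.getD i none
    | none => none

/-- Weak agreement of a value with a runtime class type `C<πs>`. -/
def wagreeVal (P : Program) (X : Heap) : Value → ClassId → List PoolAddr → Prop
  | .null, _, _ => True
  | .obj ω, C, πs => ∃ o, X ω = some (.inl o) ∧ o.cls = C ∧ o.params = πs ∧
      πs.head? ≠ some none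
  | .loc π _, C, πs => ∃ p, X π = some (.inr p) ∧ p.params = πs ∧
      πs.head? = some (some π) ∧ layoutClass P p.layout = some C

/-- Weak agreement of a pool address with a runtime bound `[C<πs>]`. -/
def wagreeBound (P : Program) (X : Heap) : PoolAddr → ClassId → List PoolAddr → Prop
  | none, _, _ => True
  | some π, C, πs => ∃ p, X π = some (.inr p) ∧ p.params = πs ∧
      πs.head? = some (some π) ∧ layoutClass P p.layout = some C

/-- Weak agreement of a pool address with a runtime pool type `L<πs>`. -/
def wagreePoolTy (P : Program) (X : Heap) (_π : PoolAddr) (L : LayoutId)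
    (πs : List PoolAddr) : Prop :=
  ∃ π₀ p, πs.head? = some (some π₀) ∧ X π₀ = some (.inr p) ∧ p.layout = L ∧ p.params = πs

def paramsAgree (P : Program) (X : Heap) (cd : ClassDecl) (πs : List PoolAddr) : Prop :=
  ∀ i (h : i < cd.params.length),
    wagreeBound P X (πs.getD i none)
      (cd.params.get ⟨i, h⟩).2.1
      ((cd.params.get ⟨i, h⟩).2.2.map (substPA (owners cd) πs))

def fieldsAgreeRec (P : Program) (X : Heap) (cd : ClassDecl) (πs : List PoolAddr)
    (ρ : List Value) : Prop :=
  ∀ i (h : i < cd.fields.length),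
    wagreeVal P X (ρ.getD i .null)
      (cd.fields.get ⟨i, h⟩).2.1
      ((cd.fields.get ⟨i, h⟩).2.2.map (substPA (owners cd) πs))

/-- The value at cluster `i`, object index `n`, slot `j`. -/
def cluster3 (κs : List (List (List Value))) (i n j : ℕ) : Value :=
  ((κs.getD i []).getD n []).getD j .null

/-- Strong agreement of the pooled object at `(π, n)` with `C<πs>`. -/
def sagreeLoc (P : Program) (X : Heap) (π n : ℕ) (C : ClassId) (πs : List PoolAddr) : Prop :=
  ∃ p cd ld, X π = some (.inr p) ∧ p.params = πs ∧ πs.head? = some (some π) ∧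
    P.layouts p.layout = some ld ∧ ld.cls = C ∧ P.classes C = some cd ∧
    ∀ f i j D zs, offsetL ld f = some (i, j) → flookup cd f = some (D, zs) →
      wagreeVal P X (cluster3 p.clusters i n j) D (zs.map (substPA (owners cd) πs))

/-- Strong agreement of the unpooled object at `ω` with `C<πs>`. -/
def sagreeObjAddr (P : Program) (X : Heap) (ω : ℕ) (C : ClassId) (πs : List PoolAddr) : Prop :=
  ∃ o cd, X ω = some (.inl o) ∧ o.cls = C ∧ o.params = πs ∧ πs.head? = some none ∧
    P.classes C = some cd ∧ paramsAgree P X cd πs ∧ fieldsAgreeRec P X cd πs o.record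

/-- Strong agreement of the pool at `π` with `L<πs>`. -/
def sagreePoolAddr (P : Program) (X : Heap) (π : ℕ) (L : LayoutId) (πs : List PoolAddr) : Prop :=
  ∃ p ld cd, X π = some (.inr p) ∧ p.layout = L ∧ p.params = πs ∧
    πs.head? = some (some π) ∧
    P.layouts L = some ld ∧ P.classes ld.cls = some cd ∧
    paramsAgree P X cd πs ∧
    (∀ κ ∈ p.clusters, κ.length = (p.clusters.headD []).length) ∧
    (∀ n, n < (p.clusters.headD []).length → sagreeLoc P X π n ld.cls πs)

/-- A well-formed heap: every address strongly agrees with some runtime type. -/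
def wfHeap (P : Program) (X : Heap) : Prop :=
  ∀ a e, X a = some e →
    (∃ C πs, sagreeObjAddr P X a C πs) ∨ (∃ L πs, sagreePoolAddr P X a L πs)

inductive Ty where
  | obj (C : ClassId) (ys : List PoolVar)
  | pool (L : LayoutId) (ys : List PoolVar)
  | bound (C : ClassId) (ys : List PoolVar)
deriving DecidableEq

abbrev Ctx := VarId → Option Ty

mutual
/-- Well-formedness of the bound `[C<ys>]` in a context. -/
inductive WfBound (P : Program) (Γ : Ctx) : ClassId → List PoolVar → Prop where
  | mk : ∀ C ys cd, P.classes C = some cd →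
      (∀ i (h : i < cd.params.length),
        PoolBoundTy P Γ (ys.getD i none)
          (cd.params.get ⟨i, h⟩).2.1
          ((cd.params.get ⟨i, h⟩).2.2.map (substPV (owners cd) ys))) →
      WfBound P Γ C ys

/-- A pool variable has a given bound type. -/
inductive PoolBoundTy (P : Program) (Γ : Ctx) : PoolVar → ClassId → List PoolVar → Prop where
  | noneB : ∀ C ys, WfBound P Γ C ys → PoolBoundTy P Γ none C ys
  | fromBound : ∀ v C ys, Γ v = some (.bound C ys) → PoolBoundTy P Γ (some v) C ys
  | fromPool : ∀ v L C ys, Γ v = some (.pool L ys) → layoutClass P L = some C →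
      PoolBoundTy P Γ (some v) C ys
end

def WfObjTy (P : Program) (Γ : Ctx) (C : ClassId) (ys : List PoolVar) : Prop :=
  WfBound P Γ C ys

def WfPoolTy (P : Program) (Γ : Ctx) (L : LayoutId) (ys : List PoolVar) : Prop :=
  ∃ C, WfBound P Γ C ys ∧ layoutClass P L = some C

/-- Expression typing: `Γ ⊢ e : C<ys>`. -/
inductive HasTy (P : Program) (Γ : Ctx) : Expr → ClassId → List PoolVar → Prop where
  | null : ∀ C ys, WfBound P Γ C ys → HasTy P Γ .null C ys
  | var : ∀ x C ys, Γ x = some (.obj C ys) → HasTy P Γ (.var x) C ys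
  | assign : ∀ x e C ys, Γ x = some (.obj C ys) → HasTy P Γ e C ys →
      HasTy P Γ (.assign x e) C ys
  | newE : ∀ C ys, WfBound P Γ C ys → HasTy P Γ (.newE C ys) C ys
  | read : ∀ x f C ys cd D zs, Γ x = some (.obj C ys) → P.classes C = some cd →
      flookup cd f = some (D, zs) →
      HasTy P Γ (.read x f) D (zs.map (substPV (owners cd) ys))
  | write : ∀ x f x' C ys cd D zs, Γ x = some (.obj C ys) → P.classes C = some cd →
      flookup cd f = some (D, zs) →
      Γ x' = some (.obj D (zs.map (substPV (owners cd) ys))) →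
      HasTy P Γ (.write x f x') D (zs.map (substPV (owners cd) ys))
  | call : ∀ x m x' C ys cd md, Γ x = some (.obj C ys) → P.classes C = some cd →
      mlookup cd m = some md →
      Γ x' = some (.obj md.paramTy.1 (md.paramTy.2.map (substPV (owners cd) ys))) →
      HasTy P Γ (.call x m x') md.retTy.1 (md.retTy.2.map (substPV (owners cd) ys))

/-- A run-time value agrees with a (static) type instantiated via the frame. -/
def agreeTy (P : Program) (X : Heap) (Φ : Frame) (r : RVal) : Ty → Prop
  | .obj C ys => ∃ v πs, r = .val v ∧ ys.mapM (poolOf Φ) = some πs ∧ wagreeVal P X v C πs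
  | .pool L ys => ∃ π πs, r = .pool π ∧ ys.mapM (poolOf Φ) = some πs ∧
      wagreePoolTy P X π L πs
  | .bound C ys => ∃ π πs, r = .pool π ∧ ys.mapM (poolOf Φ) = some πs ∧
      wagreeBound P X π C πs

/-- Well-formed configuration `Γ ⊢ X, Φ`. -/
def wfConfig (P : Program) (Γ : Ctx) (X : Heap) (Φ : Frame) : Prop :=
  wfHeap P X ∧ (∀ x, (Γ x).isSome ↔ (Φ x).isSome) ∧
  ∀ x T, Γ x = some T → ∃ r, Φ x = some r ∧ agreeTy P X Φ r T

def updHeap (X : Heap) (a : ℕ) (e : Obj ⊕ Pool) : Heap :=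
  fun b => if b = a then some e else X b

def updFrame (Φ : Frame) (x : VarId) (r : RVal) : Frame :=
  fun z => if z = x then some r else Φ z

def updCtx (Γ : Ctx) (x : VarId) (T : Ty) : Ctx :=
  fun z => if z = x then some T else Γ z

/-- `this` is a distinguished variable. -/
def thisVar : VarId := 0

/-- Append one fresh record of nulls to each cluster (pooled allocation). -/
def appendNulls (κs : List (List (List Value))) (fss : List (List FieldId)) :
    List (List (List Value)) :=
  List.zipWith (fun κ fs => κ ++ [List.replicate fs.length Value.null]) κs fss

/-- Update slot `(i, n, j)` in the clusters of a pool. -/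
def setCluster (κs : List (List (List Value))) (i n j : ℕ) (v : Value) :
    List (List (List Value)) :=
  κs.set i ((κs.getD i []).set n (((κs.getD i []).getD n []).set j v))

def getThis (P : Program) (X : Heap) : Value → Option (ClassId × List PoolAddr)
  | .obj ω => (X ω).bind fun e => match e with
      | .inl o => some (o.cls, o.params)
      | .inr _ => none
  | .loc π _ => (X π).bind fun e => match e with
      | .inr p => (layoutClass P p.layout).map fun C => (C, p.params)
      | .inl _ => none
  | .null => none

/-- The frame a method starts with: `this`, the parameter, and the class pool params. -/
def methodFrame (md : MethodDecl) (thisv : Value) (arg : RVal)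
    (ownersC : List VarId) (πs : List PoolAddr) : Frame :=
  fun z =>
    if z = thisVar then some (.val thisv)
    else if z = md.param then some arg
    else match ownersC.idxOf? z with
      | some i => some (.pool (πs.getD i none))
      | none => none

/-- Extend a method frame with its local pool and object variables. -/
def extendDecls (Φ : Frame) (πas : List ℕ) (md : MethodDecl) : Frame :=
  fun z =>
    match (md.pools.map (·.1)).idxOf? z with
    | some i => some (.pool (some (πas.getD i 0)))
    | none => match (md.locals.map (·.1)).idxOf? z with
      | some _ => some (.val .null)
      | none => Φ z

/-- Big-step operational semantics of SHAPES. -/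
inductive Red (P : Program) : Heap → Frame → Expr → Heap → Frame → Value → Prop where
  | nullR : ∀ X Φ, Red P X Φ .null X Φ .null
  | varR : ∀ X Φ x v, Φ x = some (.val v) → Red P X Φ (.var x) X Φ v
  | assignR : ∀ X Φ x e X' Φ' v, Red P X Φ e X' Φ' v →
      Red P X Φ (.assign x e) X' (updFrame Φ' x (.val v)) v
  | newObjR : ∀ X Φ C ys πs ω cd,
      ys.mapM (poolOf Φ) = some πs → πs.head? = some none →
      X ω = none → P.classes C = some cd →
      Red P X Φ (.newE C ys)
        (updHeap X ω (.inl ⟨C, πs, List.replicate cd.fields.length .null⟩)) Φ (.obj ω)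
  | newPoolR : ∀ X Φ C ys πs π p ld,
      ys.mapM (poolOf Φ) = some πs → πs.head? = some (some π) →
      X π = some (.inr p) → P.layouts p.layout = some ld →
      Red P X Φ (.newE C ys)
        (updHeap X π (.inr ⟨p.layout, p.params, appendNulls p.clusters ld.clusters⟩))
        Φ (.loc π (p.clusters.headD []).length)
  | readObjR : ∀ X Φ x f ω o cd i,
      Φ x = some (.val (.obj ω)) → X ω = some (.inl o) →
      P.classes o.cls = some cd → offsetC cd f = some i →
      Red P X Φ (.read x f) X Φ (o.record.getD i .null)
  | readPoolR : ∀ X Φ x f π n p ld i j,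
      Φ x = some (.val (.loc π n)) → X π = some (.inr p) →
      P.layouts p.layout = some ld → offsetL ld f = some (i, j) →
      Red P X Φ (.read x f) X Φ (cluster3 p.clusters i n j)
  | writeObjR : ∀ X Φ x f x' ω o cd i v,
      Φ x = some (.val (.obj ω)) → Φ x' = some (.val v) →
      X ω = some (.inl o) → P.classes o.cls = some cd → offsetC cd f = some i →
      Red P X Φ (.write x f x')
        (updHeap X ω (.inl ⟨o.cls, o.params, o.record.set i v⟩)) Φ v
  | writePoolR : ∀ X Φ x f x' π n p ld i j v,
      Φ x = some (.val (.loc π n)) → Φ x' = some (.val v) →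
      X π = some (.inr p) → P.layouts p.layout = some ld → offsetL ld f = some (i, j) →
      Red P X Φ (.write x f x')
        (updHeap X π (.inr ⟨p.layout, p.params, setCluster p.clusters i n j v⟩)) Φ v
  | callR : ∀ X Φ x m x'' v arg C πs cd md Φ₀ πas Φ₁ (X₁ : Heap) X' Φ' v',
      Φ x = some (.val v) →
      getThis P X v = some (C, πs) →
      P.classes C = some cd → mlookup cd m = some md →
      Φ x'' = some arg →
      Φ₀ = methodFrame md v arg (owners cd) πs →
      πas.length = md.pools.length → πas.Nodup →
      (∀ π ∈ πas, X π = none) →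
      Φ₁ = extendDecls Φ₀ πas md →
      (∀ i (h : i < md.pools.length),
        ∃ ld πs', P.layouts (md.pools.get ⟨i, h⟩).2.1 = some ld ∧
          ((md.pools.get ⟨i, h⟩).2.2).mapM (poolOf Φ₁) = some πs' ∧
          X₁ (πas.getD i 0) = some (.inr ⟨(md.pools.get ⟨i, h⟩).2.1, πs',
            List.replicate ld.clusters.length []⟩)) →
      (∀ a, a ∉ πas → X₁ a = X a) →
      Red P X₁ Φ₁ md.body X' Φ' v' →
      Red P X Φ (.call x m x'') X' Φ v'

/-- The typing context arising from a class's pool parameter declarations. -/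
def ctxOfClass (cd : ClassDecl) : Ctx :=
  fun z => (cd.params.find? (fun p => p.1 == z)).map fun p => Ty.bound p.2.1 p.2.2

/-- The typing context used to check a method body. -/
def ctxOfMethod (C : ClassId) (cd : ClassDecl) (md : MethodDecl) : Ctx :=
  fun z =>
    if z = thisVar then some (.obj C (cd.params.map fun p => some p.1))
    else if z = md.param then some (.obj md.paramTy.1 md.paramTy.2)
    else match md.pools.find? (fun p => p.1 == z) with
    | some p => some (.pool p.2.1 p.2.2)
    | none => match md.locals.find? (fun l => l.1 == z) with
      | some l => some (.obj l.2.1 l.2.2)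
      | none => ctxOfClass cd z

/-- A layout declaration is well-formed for a class: its clusters are a
disjoint partition of the class's fields. -/
def wfLayoutDecl (cd : ClassDecl) (ld : LayoutDecl) : Prop :=
  ld.clusters.flatten.Perm (fieldsOf cd) ∧ ∀ κ ∈ ld.clusters, κ.Nodup

def wfClassDecl (P : Program) (C : ClassId) (cd : ClassDecl) : Prop :=
  WfBound P (ctxOfClass cd) C (cd.params.map fun p => some p.1) ∧
  (∀ fd ∈ cd.fields, WfObjTy P (ctxOfClass cd) fd.2.1 fd.2.2) ∧
  ∀ md ∈ cd.methods,
    WfObjTy P (ctxOfClass cd) md.paramTy.1 md.paramTy.2 ∧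
    WfObjTy P (ctxOfClass cd) md.retTy.1 md.retTy.2 ∧
    HasTy P (ctxOfMethod C cd md) md.body md.retTy.1 md.retTy.2

def wfProgram (P : Program) : Prop :=
  (∀ C cd, P.classes C = some cd → wfClassDecl P C cd) ∧
  (∀ L ld, P.layouts L = some ld →
    ∃ cd, P.classes ld.cls = some cd ∧ wfLayoutDecl cd ld)



section AuxLemmas

/-- Two heaps related by replacing the pool at `π` with one having the same
layout and params (only clusters change). -/
def HeapSim (X X' : Heap) (π : ℕ) (p p' : Pool) : Prop :=
  X π = some (.inr p) ∧ X' π = some (.inr p') ∧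
  p'.layout = p.layout ∧ p'.params = p.params ∧
  ∀ a, a ≠ π → X' a = X a

variable {P : Program} {X X' : Heap} {π : ℕ} {p p' : Pool}

lemma HeapSim.wagreeVal (h : HeapSim X X' π p p') {v C πs}
    (hw : wagreeVal P X v C πs) : wagreeVal P X' v C πs := by
  obtain ⟨hp, hp', hl, hpar, hrest⟩ := h
  cases v with
  | null => trivial
  | obj ω =>
    obtain ⟨o, ho, h1, h2, h3⟩ := hw
    have hne : ω ≠ π := by rintro rfl; rw [hp] at ho; simp at ho
    exact ⟨o, (hrest ω hne).trans ho, h1, h2, h3⟩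
  | loc π₁ n =>
    obtain ⟨q, hq, h1, h2, h3⟩ := hw
    by_cases hne : π₁ = π
    · subst hne
      rw [hp] at hq
      obtain rfl : p = q := by simpa using hq
      exact ⟨p', hp', hpar.trans h1, h2, by rw [hl]; exact h3⟩
    · exact ⟨q, (hrest π₁ hne).trans hq, h1, h2, h3⟩

lemma HeapSim.wagreeBound (h : HeapSim X X' π p p') {π₁ C πs}
    (hw : wagreeBound P X π₁ C πs) : wagreeBound P X' π₁ C πs := by
  obtain ⟨hp, hp', hl, hpar, hrest⟩ := h
  cases π₁ with
  | none => trivial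
  | some π₁ =>
    obtain ⟨q, hq, h1, h2, h3⟩ := hw
    by_cases hne : π₁ = π
    · subst hne
      rw [hp] at hq
      obtain rfl : p = q := by simpa using hq
      exact ⟨p', hp', hpar.trans h1, h2, by rw [hl]; exact h3⟩
    · exact ⟨q, (hrest π₁ hne).trans hq, h1, h2, h3⟩

lemma HeapSim.wagreePoolTy (h : HeapSim X X' π p p') {π₁ L πs}
    (hw : wagreePoolTy P X π₁ L πs) : wagreePoolTy P X' π₁ L πs := by
  obtain ⟨hp, hp', hl, hpar, hrest⟩ := h
  obtain ⟨π₀, q, h0, hq, h1, h2⟩ := hw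
  by_cases hne : π₀ = π
  · rw [hne, hp] at hq
    obtain rfl : p = q := by simpa using hq
    exact ⟨π₀, p', h0, by rw [hne]; exact hp', hl.trans h1, hpar.trans h2⟩
  · exact ⟨π₀, q, h0, (hrest π₀ hne).trans hq, h1, h2⟩

lemma HeapSim.paramsAgree (h : HeapSim X X' π p p') {cd πs}
    (hw : paramsAgree P X cd πs) : paramsAgree P X' cd πs :=
  fun i hi => h.wagreeBound (hw i hi)

lemma HeapSim.fieldsAgreeRec (h : HeapSim X X' π p p') {cd πs ρ}
    (hw : fieldsAgreeRec P X cd πs ρ) : fieldsAgreeRec P X' cd πs ρ :=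
  fun i hi => h.wagreeVal (hw i hi)

lemma HeapSim.sagreeObjAddr (h : HeapSim X X' π p p') {ω C πs}
    (hw : sagreeObjAddr P X ω C πs) : sagreeObjAddr P X' ω C πs := by
  obtain ⟨o, cd, ho, h1, h2, h3, h4, h5, h6⟩ := hw
  have hne : ω ≠ π := by rintro rfl; rw [h.1] at ho; simp at ho
  exact ⟨o, cd, (h.2.2.2.2 ω hne).trans ho, h1, h2, h3, h4,
    h.paramsAgree h5, h.fieldsAgreeRec h6⟩

lemma HeapSim.sagreeLoc (h : HeapSim X X' π p p') {π₁ n C πs} (hne : π₁ ≠ π)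
    (hw : sagreeLoc P X π₁ n C πs) : sagreeLoc P X' π₁ n C πs := by
  obtain ⟨q, cd, ld, hq, h1, h2, h3, h4, h5, h6⟩ := hw
  exact ⟨q, cd, ld, (h.2.2.2.2 π₁ hne).trans hq, h1, h2, h3, h4, h5,
    fun f i j D zs ho hf => h.wagreeVal (h6 f i j D zs ho hf)⟩

lemma HeapSim.sagreePoolAddr (h : HeapSim X X' π p p') {π₁ L πs} (hne : π₁ ≠ π)
    (hw : sagreePoolAddr P X π₁ L πs) : sagreePoolAddr P X' π₁ L πs := by
  obtain ⟨q, ld, cd, hq, h1, h2, h3, h4, h5, h6, h7, h8⟩ := hw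
  exact ⟨q, ld, cd, (h.2.2.2.2 π₁ hne).trans hq, h1, h2, h3, h4, h5,
    h.paramsAgree h6, h7, fun n hn => h.sagreeLoc hne (h8 n hn)⟩

lemma cluster3_appendNulls (κs : List (List (List Value))) (fss : List (List FieldId))
    (i n j : ℕ) :
    cluster3 (appendNulls κs fss) i n j = cluster3 κs i n j ∨
    cluster3 (appendNulls κs fss) i n j = .null := by
  unfold cluster3 appendNulls
  by_cases hi : i < min κs.length fss.length
  · have h1 : i < κs.length := hi.trans_le (min_le_left _ _)
    have h2 : i < fss.length := hi.trans_le (min_le_right _ _)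
    have heq : (List.zipWith (fun κ fs => κ ++ [List.replicate fs.length Value.null]) κs fss).getD i []
        = κs[i] ++ [List.replicate (fss[i]).length Value.null] := by
      rw [List.getD_eq_getElem?_getD, List.getElem?_zipWith]
      simp [List.getElem?_eq_getElem, h1, h2]
    rw [heq]
    rcases lt_trichotomy n (κs[i]).length with hn | hn | hn
    · left
      rw [List.getD_eq_getElem?_getD (l := κs[i] ++ _), List.getElem?_append]
      simp only [hn, if_pos]
      rw [← List.getD_eq_getElem?_getD, List.getD_eq_getElem?_getD (l := κs),
        List.getElem?_eq_getElem h1]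
      rfl
    · right
      have heq2 : (κs[i] ++ [List.replicate (fss[i]).length Value.null]).getD n [] =
          List.replicate (fss[i]).length Value.null := by
        rw [List.getD_eq_getElem?_getD, List.getElem?_append_right hn.ge]
        simp [hn]
      rw [heq2]
      simp only [List.getD_eq_getElem?_getD, List.getElem?_replicate]
      split <;> rfl
    · right
      have heq2 : (κs[i] ++ [List.replicate (fss[i]).length Value.null]).getD n [] = [] := by
        rw [List.getD_eq_getElem?_getD, List.getElem?_eq_none]
        · rfl
        · simp; omega
      rw [heq2]; rfl
  · right
    have heq : (List.zipWith (fun κ fs => κ ++ [List.replicate fs.length Value.null]) κs fss).getD i [] = [] := by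
      rw [List.getD_eq_getElem?_getD, List.getElem?_eq_none]
      · rfl
      · simp only [List.length_zipWith]; omega
    rw [heq]; rfl

lemma cluster3_out (κs : List (List (List Value))) {m : ℕ}
    (hm : ∀ κ ∈ κs, κ.length = m) (i j : ℕ) :
    cluster3 κs i m j = .null := by
  unfold cluster3
  by_cases hi : i < κs.length
  · have : κs.getD i [] = κs[i] := by
      rw [List.getD_eq_getElem?_getD, List.getElem?_eq_getElem hi]; rfl
    rw [this]
    have hlen : (κs[i]).length = m := hm _ (List.getElem_mem hi)
    have : (κs[i]).getD m [] = [] := by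
      rw [List.getD_eq_getElem?_getD, List.getElem?_eq_none (by omega)]; rfl
    rw [this]; rfl
  · have : κs.getD i [] = [] := by
      rw [List.getD_eq_getElem?_getD, List.getElem?_eq_none (by omega)]; rfl
    rw [this]; rfl

lemma appendNulls_get_length (κs : List (List (List Value))) (fss : List (List FieldId))
    {m : ℕ} (hm : ∀ κ ∈ κs, κ.length = m) {i : ℕ} (hi : i < (appendNulls κs fss).length) :
    ((appendNulls κs fss)[i]).length = m + 1 := by
  unfold appendNulls at *
  simp only [List.length_zipWith] at hi
  rw [List.getElem_zipWith]
  simp only [List.length_append, List.length_replicate, List.length_singleton]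
  have h1 : i < κs.length := lt_of_lt_of_le hi (min_le_left _ _)
  rw [hm _ (List.getElem_mem h1)]

end AuxLemmas

/-- Pooled allocation preservation: if `(Γ, X, Φ)` is well-formed,
`Φ(ys) = π·…` with `π ≠ none`, the pool at `π` strongly agrees with its
layout type, and layout `L` for class `C` has clusters `fs₀..fsₙ`, then the
heap obtained by appending `null^|fsᵢ|` to each cluster `κᵢ` is well-formed,
and the new location `(π, |κ₀|)` weakly agrees with `C<Φ(ys)>`. -/
theorem pooled_alloc_preservation (P : Program) (Γ : Ctx) (X X' : Heap)
    (Φ : Frame) (ys : List PoolVar) (πs : List PoolAddr) (π : ℕ)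
    (p : Pool) (ld : LayoutDecl) (C : ClassId)
    (hwf : wfConfig P Γ X Φ)
    (hπs : ys.mapM (poolOf Φ) = some πs)
    (hhd : πs.head? = some (some π))
    (hp : X π = some (.inr p))
    (hstrong : sagreePoolAddr P X π p.layout πs)
    (hld : P.layouts p.layout = some ld)
    (hC : ld.cls = C)
    (hX' : X' = updHeap X π
      (.inr ⟨p.layout, p.params, appendNulls p.clusters ld.clusters⟩)) :
    wfHeap P X' ∧ wagreeVal P X' (.loc π (p.clusters.headD []).length) C πs := by
  subst hC hX'
  -- unpack strong agreement
  obtain ⟨p₂, ld₂, cd, hp₂, hlay₂, hparams, hhd₂, hld₂, hcd, hpa, hlens, hlocs⟩ := hstrong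
  obtain rfl : p = p₂ := by rw [hp] at hp₂; simpa using hp₂
  obtain rfl : ld = ld₂ := by rw [hld] at hld₂; simpa using hld₂
  set m := (p.clusters.headD []).length with hm
  have hκlen : ∀ κ ∈ p.clusters, κ.length = m := hlens
  set p' : Pool := ⟨p.layout, p.params, appendNulls p.clusters ld.clusters⟩ with hp'def
  have hp' : updHeap X π (.inr p') π = some (.inr p') := by simp [updHeap]
  have hrest : ∀ a, a ≠ π → updHeap X π (.inr p') a = X a := by
    intro a ha; simp [updHeap, ha]
  have hsim : HeapSim X (updHeap X π (.inr p')) π p p' :=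
    ⟨hp, hp', rfl, rfl, hrest⟩
  have hcleq : p'.clusters = appendNulls p.clusters ld.clusters := rfl
  -- length of the head of the new clusters
  have hhead' : p'.clusters = [] ∨ (p'.clusters.headD []).length = m + 1 := by
    by_cases hnil : p'.clusters = []
    · exact Or.inl hnil
    · right
      have h0 : 0 < p'.clusters.length := List.length_pos_iff.2 hnil
      have hh : p'.clusters.headD [] = p'.clusters[0] := by
        rw [List.headD_eq_head?, List.head?_eq_getElem?, List.getElem?_eq_getElem h0]
        rfl
      rw [hh]
      exact appendNulls_get_length p.clusters ld.clusters hκlen (hcleq ▸ h0)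
  -- lengths of new clusters
  have hnewlen : ∀ κ ∈ p'.clusters, κ.length =
      (p'.clusters.headD []).length := by
    intro κ hκ
    obtain ⟨i, hi, rfl⟩ := List.mem_iff_getElem.1 hκ
    rcases hhead' with hnil | hlen
    · rw [hnil] at hi; simp at hi
    · rw [hlen]
      exact appendNulls_get_length p.clusters ld.clusters hκlen (hcleq ▸ hi)
  -- the new pool strongly agrees
  have hsagree : sagreePoolAddr P (updHeap X π (.inr p')) π p.layout πs := by
    refine ⟨p', ld, cd, hp', rfl, hparams, hhd, hld, hcd, hsim.paramsAgree hpa,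
      hnewlen, ?_⟩
    intro n hn
    refine ⟨p', cd, ld, hp', hparams, hhd, hld, rfl, hcd, ?_⟩
    intro f i j D zs ho hf
    rcases hhead' with hnil | hlen
    · rw [hnil] at hn; simp at hn
    rw [hlen] at hn
    rw [hcleq]
    rcases cluster3_appendNulls p.clusters ld.clusters i n j with hcc | hcc
    · -- value unchanged
      rw [hcc]
      by_cases hnm : n < m
      · obtain ⟨q₃, cd₃, ld₃, hq₃, _, _, hld₃, _, hcd₃, hw₃⟩ := hlocs n hnm
        obtain rfl : p = q₃ := by rw [hp] at hq₃; simpa using hq₃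
        obtain rfl : ld = ld₃ := by rw [hld] at hld₃; simpa using hld₃
        obtain rfl : cd = cd₃ := by rw [hcd] at hcd₃; simpa using hcd₃
        exact hsim.wagreeVal (hw₃ f i j D zs ho hf)
      · -- n = m: value is null since all clusters have length m
        have hnm' : n = m := by omega
        subst hnm'
        rw [cluster3_out p.clusters hκlen]
        trivial
    · rw [hcc]; trivial
  constructor
  · -- well-formed heap
    intro a e ha
    by_cases hne : a = π
    · subst hne
      right
      exact ⟨p.layout, πs, hsagree⟩
    · rw [hrest a hne] at ha
      rcases hwf.1 a e ha with ⟨C₁, πs₁, h₁⟩ | ⟨L₁, πs₁, h₁⟩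
      · exact Or.inl ⟨C₁, πs₁, hsim.sagreeObjAddr h₁⟩
      · exact Or.inr ⟨L₁, πs₁, hsim.sagreePoolAddr hne h₁⟩
  · -- weak agreement of the new location
    exact ⟨p', hp', hparams, hhd, by
      simp only [hp'def, layoutClass, hld, Option.map_some]⟩

end Shapes
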